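/- Let f : {0,1}^n → {0,1} be a Boolean function and let M = x_{i_1}⋯x_{i_k} be a monomial that is a sub-monomial of some monomial of the multilinear polynomial representation of f over F₂. Then M is a maximal monomial of f if and only if ∑_{(ξ_1,…,ξ_k) ∈ {0,1}^k} f_{|x_{i_1}←ξ_1,…,x_{i_k}←ξ_k} (sum modulo 2) is the constant function 1. -/

import Mathlib

/-- Evaluation of a multilinear monomial (a set of variables) at a point. -/
def evalMono {n : ℕ} (M : Finset (Fin n)) (x : Fin n → Bool) : Bool :=
  decide (∀ i ∈ M, x i = true)

/-- Evaluation at `x` of the multilinear polynomial over `F₂` whose set of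
monomials is `S` (sum modulo 2 of the monomials of `S`). -/
def polyEval {n : ℕ} (S : Finset (Finset (Fin n))) (x : Fin n → Bool) : Bool :=
  decide ((S.filter (fun M => evalMono M x = true)).card % 2 = 1)

/-- `S` is the (unique) multilinear `F₂`-polynomial representation of `f`:
the polynomial with monomial set `S` computes `f` everywhere. -/
def Represents {n : ℕ} (S : Finset (Finset (Fin n))) (f : (Fin n → Bool) → Bool) : Prop :=
  ∀ x, polyEval S x = f x

open Finset

private lemma natmod (c : ℕ) : (if c % 2 = 1 then (1 : ZMod 2) else 0) = (c : ZMod 2) := by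
  have h := ZMod.natCast_mod c 2
  rcases Nat.mod_two_eq_zero_or_one c with h2 | h2
  · rw [if_neg (by omega), ← h, h2]; simp
  · rw [if_pos h2, ← h, h2]; simp

private lemma mod_two_iff (c : ℕ) : c % 2 = 1 ↔ (c : ZMod 2) = 1 := by
  rw [← natmod]
  rcases Nat.mod_two_eq_zero_or_one c with h2 | h2 <;> simp [h2]

private lemma ite_and_mul (p q : Prop) [Decidable p] [Decidable q] :
    (if p ∧ q then (1 : ZMod 2) else 0) = (if p then 1 else 0) * (if q then 1 else 0) := by
  by_cases hp : p <;> by_cases hq : q <;> simp [hp, hq]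

private lemma evalMono_true_iff {n : ℕ} (M : Finset (Fin n)) (x : Fin n → Bool) :
    evalMono M x = true ↔ ∀ i ∈ M, x i = true := by simp [evalMono]

private lemma polyEval_true_iff {n : ℕ} (S : Finset (Finset (Fin n))) (x : Fin n → Bool) :
    polyEval S x = true ↔ (S.filter (fun M => evalMono M x = true)).card % 2 = 1 := by
  simp [polyEval]

private lemma polyEval_sum {n : ℕ} (S : Finset (Finset (Fin n))) (x : Fin n → Bool) :
    (if polyEval S x = true then (1 : ZMod 2) else 0)
      = ∑ M ∈ S, (if evalMono M x = true then (1 : ZMod 2) else 0) := by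
  classical
  rw [Finset.sum_boole]
  unfold polyEval
  simp only [decide_eq_true_eq]
  exact natmod _

private lemma exists_true {n : ℕ} (T : Finset (Finset (Fin n))) (hT : T.Nonempty) :
    ∃ x, polyEval T x = true := by
  classical
  obtain ⟨M, hM, hmin⟩ := T.exists_minimal hT
  refine ⟨fun i => decide (i ∈ M), ?_⟩
  have hfil : T.filter (fun M' => evalMono M' (fun i => decide (i ∈ M)) = true) = {M} := by
    ext M'
    simp only [mem_filter, evalMono_true_iff, decide_eq_true_eq, mem_singleton]
    constructor
    · rintro ⟨hM', hsub⟩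
      have hsub' : M' ⊆ M := fun i hi => hsub i hi
      by_contra hne
      exact hne (le_antisymm hsub' (hmin hM' hsub'))
    · rintro rfl; exact ⟨hM, fun i hi => hi⟩
  rw [polyEval_true_iff, hfil]
  simp

private lemma const_one_iff {n : ℕ} (T : Finset (Finset (Fin n))) :
    (∀ x, polyEval T x = true) ↔ T = {∅} := by
  classical
  constructor
  · intro h
    have hone : (∅ : Finset (Fin n)) ∈ T := by
      by_contra hne
      have hx := h (fun _ => false)
      have hfil : T.filter (fun M => evalMono M (fun _ => false) = true) = ∅ := by
        rw [Finset.filter_eq_empty_iff]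
        intro M hM
        simp only [evalMono_true_iff]
        intro hall
        rcases Finset.eq_empty_or_nonempty M with rfl | ⟨i, hi⟩
        · exact hne hM
        · exact absurd (hall i hi) (by simp)
      rw [polyEval_true_iff, hfil] at hx
      simp at hx
    have herase : T.erase ∅ = ∅ := by
      by_contra hne
      obtain ⟨x, hx⟩ := exists_true _ (Finset.nonempty_of_ne_empty hne)
      have hx' := h x
      rw [polyEval_true_iff] at hx hx'
      have hT : T = insert ∅ (T.erase ∅) := (Finset.insert_erase hone).symm
      rw [hT, Finset.filter_insert, if_pos (by simp [evalMono]),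
        Finset.card_insert_of_notMem (by simp)] at hx'
      omega
    have := Finset.insert_erase hone
    rw [herase] at this
    simpa using this.symm
  · rintro rfl x
    rw [polyEval_true_iff]
    have : ({∅} : Finset (Finset (Fin n))).filter (fun M => evalMono M x = true) = {∅} := by
      rw [Finset.filter_singleton, if_pos (by simp [evalMono])]
    rw [this]; simp

private lemma count_lemma {n : ℕ} (A M : Finset (Fin n)) (x : Fin n → Bool) :
    (((Finset.univ : Finset (Fin n → Bool)).filter (fun ξ =>
        (∀ i, i ∉ A → ξ i = false) ∧
          evalMono M (fun i => if i ∈ A then ξ i else x i) = true)).card : ZMod 2)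
      = if A ⊆ M ∧ evalMono (M \ A) x = true then 1 else 0 := by
  classical
  by_cases hx : evalMono (M \ A) x = true
  · have hxmem : ∀ i ∈ M, i ∉ A → x i = true := by
      intro i hi hiA
      exact (evalMono_true_iff _ _).1 hx i (Finset.mem_sdiff.2 ⟨hi, hiA⟩)
    have hcard : ((Finset.univ : Finset (Fin n → Bool)).filter (fun ξ =>
        (∀ i, i ∉ A → ξ i = false) ∧
          evalMono M (fun i => if i ∈ A then ξ i else x i) = true)).card
        = 2 ^ (A \ M).card := by
      have h2 : ((Finset.univ : Finset ((A \ M : Finset (Fin n)) → Bool))).card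
          = 2 ^ (A \ M).card := by
        rw [Finset.card_univ, Fintype.card_fun, Fintype.card_coe, Fintype.card_bool]
      rw [← h2]
      apply Finset.card_bij' (fun ξ _ => fun j : (A \ M : Finset (Fin n)) => ξ j.1)
        (fun g _ => fun i => if h : i ∈ A \ M then g ⟨i, h⟩ else decide (i ∈ A))
      · intro ξ hξ
        exact Finset.mem_univ _
      · intro g hg
        rw [Finset.mem_filter]
        refine ⟨Finset.mem_univ _, ?_, ?_⟩
        · intro i hiA
          show (if h : i ∈ A \ M then g ⟨i, h⟩ else decide (i ∈ A)) = false
          rw [dif_neg (fun h => hiA (Finset.mem_sdiff.1 h).1)]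
          simp [hiA]
        · rw [evalMono_true_iff]
          intro i hi
          by_cases hiA : i ∈ A
          · show (if i ∈ A then (if h : i ∈ A \ M then g ⟨i, h⟩ else decide (i ∈ A)) else x i) = true
            rw [if_pos hiA, dif_neg (fun h => (Finset.mem_sdiff.1 h).2 hi)]
            simp [hiA]
          · show (if i ∈ A then (if h : i ∈ A \ M then g ⟨i, h⟩ else decide (i ∈ A)) else x i) = true
            rw [if_neg hiA]
            exact hxmem i hi hiA
      · intro ξ hξ
        rw [Finset.mem_filter] at hξ
        funext i
        show (if h : i ∈ A \ M then ξ (⟨i, h⟩ : (A \ M : Finset (Fin n))).1 else decide (i ∈ A)) = ξ i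
        by_cases h : i ∈ A \ M
        · rw [dif_pos h]
        · rw [dif_neg h]
          by_cases hiA : i ∈ A
          · have hiM : i ∈ M := by
              by_contra hiM
              exact h (Finset.mem_sdiff.2 ⟨hiA, hiM⟩)
            have := (evalMono_true_iff _ _).1 hξ.2.2 i hiM
            rw [if_pos hiA] at this
            simp [hiA, this]
          · have := hξ.2.1 i hiA
            simp [hiA, this]
      · intro g hg
        funext j
        show (if h : (j : Fin n) ∈ A \ M then g ⟨j, h⟩ else decide ((j : Fin n) ∈ A)) = g j
        rw [dif_pos j.2]
    rw [hcard]
    by_cases hAM : A ⊆ M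
    · have hAMe : A \ M = ∅ := Finset.sdiff_eq_empty_iff_subset.2 hAM
      rw [if_pos ⟨hAM, hx⟩, hAMe]
      simp
    · have hne : (A \ M).Nonempty := by rwa [Finset.sdiff_nonempty]
      have hc : (A \ M).card ≠ 0 := Finset.card_ne_zero_of_mem hne.choose_spec
      rw [if_neg (fun h => hAM h.1)]
      rw [Nat.cast_pow]
      have : ((2 : ℕ) : ZMod 2) = 0 := by decide
      rw [this, zero_pow hc]
  · have hfil : ((Finset.univ : Finset (Fin n → Bool)).filter (fun ξ =>
        (∀ i, i ∉ A → ξ i = false) ∧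
          evalMono M (fun i => if i ∈ A then ξ i else x i) = true)) = ∅ := by
      rw [Finset.filter_eq_empty_iff]
      rintro ξ _ ⟨hP, hev⟩
      apply hx
      rw [evalMono_true_iff]
      intro i hi
      rw [Finset.mem_sdiff] at hi
      have := (evalMono_true_iff _ _).1 hev i hi.1
      rwa [if_neg hi.2] at this
    rw [hfil, if_neg (fun h => hx h.2)]
    simp

theorem stmt17 {n : ℕ} (f : (Fin n → Bool) → Bool)
    (S : Finset (Finset (Fin n))) (hS : Represents S f)
    (A : Finset (Fin n)) (hsub : ∃ M' ∈ S, A ⊆ M') :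
    (A ∈ S ∧ ∀ M' ∈ S, M' ≠ A → ¬ A ⊆ M') ↔
      ∀ x : Fin n → Bool,
        decide ((Finset.univ.filter (fun ξ : Fin n → Bool =>
          (∀ i, i ∉ A → ξ i = false) ∧
            f (fun i => if i ∈ A then ξ i else x i) = true)).card % 2 = 1) = true := by
  classical
  set T : Finset (Finset (Fin n)) := (S.filter fun M => A ⊆ M).image (fun M => M \ A) with hT
  have hinj : Set.InjOn (fun M => M \ A) ↑(S.filter fun M => A ⊆ M) := by
    intro M1 h1 M2 h2 h
    simp only [Finset.coe_filter, Set.mem_setOf_eq] at h1 h2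
    have e1 : M1 \ A ∪ A = M1 := Finset.sdiff_union_of_subset h1.2
    have e2 : M2 \ A ∪ A = M2 := Finset.sdiff_union_of_subset h2.2
    rw [← e1, ← e2]
    simp only at h
    rw [h]
  have hmaxiff : (A ∈ S ∧ ∀ M' ∈ S, M' ≠ A → ¬ A ⊆ M') ↔ T = {∅} := by
    constructor
    · rintro ⟨hA, hmax⟩
      have hfil : S.filter (fun M => A ⊆ M) = {A} := by
        ext M
        simp only [Finset.mem_filter, Finset.mem_singleton]
        constructor
        · rintro ⟨hMS, hAM⟩
          by_contra hne
          exact hmax M hMS hne hAM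
        · rintro rfl; exact ⟨hA, Finset.Subset.refl _⟩
      rw [hT, hfil]
      simp
    · intro h
      have hne : (S.filter fun M => A ⊆ M).Nonempty := by
        obtain ⟨M', hM', hAM'⟩ := hsub
        exact ⟨M', Finset.mem_filter.2 ⟨hM', hAM'⟩⟩
      have hsubA : ∀ M ∈ S.filter (fun M => A ⊆ M), M = A := by
        intro M hM
        have hmem : M \ A ∈ T := by
          rw [hT]; exact Finset.mem_image_of_mem _ hM
        rw [h, Finset.mem_singleton] at hmem
        have hAM := (Finset.mem_filter.1 hM).2
        exact Finset.Subset.antisymm (Finset.sdiff_eq_empty_iff_subset.1 hmem) hAM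
      obtain ⟨M, hM⟩ := hne
      have hAS : A ∈ S := by
        have := hsubA M hM
        rw [← this]
        exact (Finset.mem_filter.1 hM).1
      refine ⟨hAS, fun M' hM' hne' hAM' => ?_⟩
      exact hne' (hsubA M' (Finset.mem_filter.2 ⟨hM', hAM'⟩))
  have key : ∀ x : Fin n → Bool,
      (((Finset.univ.filter (fun ξ : Fin n → Bool =>
          (∀ i, i ∉ A → ξ i = false) ∧
            f (fun i => if i ∈ A then ξ i else x i) = true)).card : ℕ) : ZMod 2)
        = ((T.filter fun N => evalMono N x = true).card : ZMod 2) := by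
    intro x
    have hTfil : T.filter (fun N => evalMono N x = true)
        = (S.filter (fun M => A ⊆ M ∧ evalMono (M \ A) x = true)).image (fun M => M \ A) := by
      rw [hT, Finset.filter_image, Finset.filter_filter]
    have hTcard : (T.filter fun N => evalMono N x = true).card
        = (S.filter (fun M => A ⊆ M ∧ evalMono (M \ A) x = true)).card := by
      rw [hTfil]
      apply Finset.card_image_of_injOn
      apply hinj.mono
      intro M hM
      simp only [Finset.coe_filter, Set.mem_setOf_eq] at hM ⊢
      exact ⟨hM.1, hM.2.1⟩
    rw [hTcard, ← Finset.sum_boole, ← Finset.sum_boole]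
    calc (∑ ξ : Fin n → Bool, if (∀ i, i ∉ A → ξ i = false) ∧
            f (fun i => if i ∈ A then ξ i else x i) = true then (1 : ZMod 2) else 0)
        = ∑ ξ : Fin n → Bool, ∑ M ∈ S, (if (∀ i, i ∉ A → ξ i = false) ∧
            evalMono M (fun i => if i ∈ A then ξ i else x i) = true then (1 : ZMod 2) else 0) := by
          apply Finset.sum_congr rfl
          intro ξ _
          rw [← hS, ite_and_mul, polyEval_sum, Finset.mul_sum]
          apply Finset.sum_congr rfl
          intro M _
          rw [← ite_and_mul]
      _ = ∑ M ∈ S, ∑ ξ : Fin n → Bool, (if (∀ i, i ∉ A → ξ i = false) ∧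
            evalMono M (fun i => if i ∈ A then ξ i else x i) = true then (1 : ZMod 2) else 0) :=
          Finset.sum_comm
      _ = ∑ M ∈ S, (if A ⊆ M ∧ evalMono (M \ A) x = true then (1 : ZMod 2) else 0) := by
          apply Finset.sum_congr rfl
          intro M _
          rw [Finset.sum_boole]
          exact count_lemma A M x
  have hiff : ∀ x : Fin n → Bool,
      (decide ((Finset.univ.filter (fun ξ : Fin n → Bool =>
          (∀ i, i ∉ A → ξ i = false) ∧
            f (fun i => if i ∈ A then ξ i else x i) = true)).card % 2 = 1) = true)
        ↔ polyEval T x = true := by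
    intro x
    rw [decide_eq_true_eq, polyEval_true_iff, mod_two_iff, mod_two_iff, key x]
  rw [hmaxiff, ← const_one_iff]
  exact forall_congr' fun x => (hiff x).symm
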